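/- Let F be an endofunctor on Set and L a lax F-lifting, and let λ^L be defined by λ^L_Z := χ_{L(∋_Z)}. If L is diagonal-preserving, then λ^L is laxly extensional, i.e., λ^L_Z ∘ F η_Z ≤ η_{F Z} for all Z. If L is symmetric, then λ^L is symmetric, i.e., (λ^L_Y ∘ F f)^♭ = λ^L_X ∘ F (f^♭) for all f : X → P Y. -/

import Mathlib

universe u v

open CategoryTheory

/-- Relational composition (as `Rel.comp` was defined in the older Mathlib). -/
def Rel.comp {α β γ : Type*} (r : Rel α β) (s : Rel β γ) : Rel α γ :=
  fun x z => ∃ y, r x y ∧ s y z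

/-- Converse relation (as `Rel.inv` was defined in the older Mathlib). -/
def Rel.inv {α β : Type*} (r : Rel α β) : Rel β α := flip r

/-- The graph of a function, as a relation. -/
def gr {X Y : Type u} (f : X → Y) : Rel X Y := fun x y => f x = y

/-- A lax lifting of an endofunctor `F` on `Set` to relations: monotone, laxly
functorial, and laxly extending graphs and converse graphs. -/
structure LaxLifting (F : Type u ⥤ Type u) : Type (u + 1) where
  map : ∀ {X Y : Type u}, Rel X Y → Rel (F.obj X) (F.obj Y)
  mono : ∀ {X Y : Type u} {R S : Rel X Y}, R ≤ S → map R ≤ map S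
  laxComp : ∀ {X Y Z : Type u} (R : Rel X Y) (S : Rel Y Z),
    (map R).comp (map S) ≤ map (R.comp S)
  graph_le : ∀ {X Y : Type u} (f : X → Y), gr (F.map (↾f)) ≤ map (gr f)
  graphInv_le : ∀ {X Y : Type u} (f : X → Y), (gr (F.map (↾f))).inv ≤ map (gr f).inv

/-- Pointwise order on lax liftings. -/
def LiftLE {F : Type u ⥤ Type u} (L L' : LaxLifting F) : Prop :=
  ∀ (X Y : Type u) (R : Rel X Y), L.map R ≤ L'.map R

/-- A lax distributive law of \`F\` over the powerset monad: a family of maps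
\`λ_X : F (P X) → P (F X)\` that is monotone, laxly natural, and laxly compatible
with the unit and multiplication of the powerset monad. -/
structure LaxDistLaw (F : Type u ⥤ Type u) : Type (u + 1) where
  app : ∀ Z : Type u, F.obj (Set Z) → Set (F.obj Z)
  mono : ∀ (X Y : Type u) (f g : X → Set Y), (∀ x, f x ⊆ g x) →
    ∀ a : F.obj X, app Y (F.map (↾f) a) ⊆ app Y (F.map (↾g) a)
  laxNat : ∀ (X Y : Type u) (f : X → Set Y) (a : F.obj (Set X)),
    F.map (↾f) '' app X a ⊆ app (Set Y) (F.map (↾(Set.image f)) a)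
  laxMul : ∀ (Z : Type u) (a : F.obj (Set (Set Z))),
    ⋃₀ (app Z '' app (Set Z) a) ⊆ app Z (F.map (↾Set.sUnion) a)
  laxUnit : ∀ (Z : Type u) (a : F.obj Z),
    a ∈ app Z (F.map (↾(fun z => ({z} : Set Z))) a)

/-- The Kleisli map \`χ_R : X → P Y\` associated to a relation \`R : X ⇸ Y\`. -/
def chi {X Y : Type u} (R : Rel X Y) : X → Set Y := fun x => {y | R x y}

/-- The membership relation \`∋_Z : P Z ⇸ Z\`. -/
def memRel (Z : Type u) : Rel (Set Z) Z := fun A z => z ∈ A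

/-- The lifting assignment \`L^λ\` induced by a distributive-law-shaped family:
\`L^λ R := ⌊λ_Y ∘ F χ_R⌋\`. -/
def toLiftMap (F : Type u ⥤ Type u) (lam : ∀ Z : Type u, F.obj (Set Z) → Set (F.obj Z)) :
    ∀ X Y : Type u, Rel X Y → Rel (F.obj X) (F.obj Y) :=
  fun X Y R a b => b ∈ lam Y (F.map (↾(chi R)) a)

/-- The distributive-law-shaped family \`λ^L\` induced by a lifting assignment:
\`λ^L_Z := χ_{L(∋_Z)}\`. -/
def toLawMap (F : Type u ⥤ Type u)
    (Lm : ∀ X Y : Type u, Rel X Y → Rel (F.obj X) (F.obj Y)) :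
    ∀ Z : Type u, F.obj (Set Z) → Set (F.obj Z) :=
  fun Z a => {b | Lm (Set Z) Z (memRel Z) a b}
/-- The converse of a Kleisli map: `f^♭(y) = {x | y ∈ f x}`. -/
def flat {A B : Type u} (f : A → Set B) : B → Set A := fun b => {a | b ∈ f a}

/-- If `L` is diagonal-preserving then `λ^L` is laxly extensional; if `L` is
symmetric then `λ^L` is symmetric. -/
theorem toLawMap_extensional_and_symmetric (F : Type u ⥤ Type u) (L : LaxLifting F) :
    ((∀ (X : Type u) (a b : F.obj X), L.map (fun x y : X => x = y) a b → a = b) →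
      ∀ (Z : Type u) (a : F.obj Z),
        toLawMap F (fun X Y => L.map (X := X) (Y := Y)) Z
            (F.map (↾(fun z => ({z} : Set Z))) a) ⊆ {a}) ∧
    ((∀ (X Y : Type u) (R : Rel X Y), L.map R.inv = (L.map R).inv) →
      ∀ (X Y : Type u) (f : X → Set Y),
        flat (fun a : F.obj X =>
            toLawMap F (fun X Y => L.map (X := X) (Y := Y)) Y (F.map (↾f) a)) =
          fun b : F.obj Y =>
            toLawMap F (fun X Y => L.map (X := X) (Y := Y)) X (F.map (↾(flat f)) b)) := by
  constructor
  · intro hd Z a b hb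
    have h1 : L.map (gr (fun z => ({z} : Set Z))) a (F.map (↾(fun z => ({z} : Set Z))) a) :=
      L.graph_le _ a _ rfl
    have h2 : L.map ((gr (fun z => ({z} : Set Z))).comp (memRel Z)) a b :=
      L.laxComp _ _ a b ⟨_, h1, hb⟩
    have h3 : L.map (fun x y : Z => x = y) a b := by
      refine L.mono ?_ a b h2
      rintro x y ⟨A, hA, hy⟩
      simp only [gr] at hA
      have : y ∈ ({x} : Set Z) := hA ▸ hy
      exact this.symm
    exact (hd Z a b h3).symm
  · intro hs X Y f
    funext b
    ext a
    show L.map (memRel Y) (F.map (↾f) a) b ↔ L.map (memRel X) (F.map (↾(flat f)) b) a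
    constructor
    · intro h
      have h1 : L.map ((gr f).comp (memRel Y)) a b :=
        L.laxComp _ _ a b ⟨_, L.graph_le f a _ rfl, h⟩
      have h2 : L.map ((gr f).comp (memRel Y)).inv b a := by
        rw [hs]; exact h1
      have h3 : L.map (gr (flat f)).inv (F.map (↾(flat f)) b) b :=
        L.graphInv_le (flat f) _ b rfl
      have h4 := L.laxComp _ _ (F.map (↾(flat f)) b) a ⟨b, h3, h2⟩
      refine L.mono ?_ _ a h4
      rintro A x ⟨y, hA, z, hz, hy⟩
      simp only [gr] at hA hz
      show x ∈ A
      subst hA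
      show y ∈ f x
      exact hz ▸ hy
    · intro h
      have h1 : L.map ((gr (flat f)).comp (memRel X)) b a :=
        L.laxComp _ _ b a ⟨_, L.graph_le (flat f) b _ rfl, h⟩
      have h2 : L.map ((gr (flat f)).comp (memRel X)).inv a b := by
        rw [hs]; exact h1
      have h3 : L.map (gr f).inv (F.map (↾f) a) a :=
        L.graphInv_le f _ a rfl
      have h4 := L.laxComp _ _ (F.map (↾f) a) b ⟨a, h3, h2⟩
      refine L.mono ?_ _ b h4
      rintro A y ⟨x, hA, B, hB, hx⟩
      simp only [gr] at hA hB
      show y ∈ A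
      subst hA
      have hx' : x ∈ flat f y := hB ▸ hx
      exact hx'
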